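/- With the notation of the parametric curve Γ (c > 0, 0 < q1 < q2 ≤ 1, ρ1, ρ2 as defined, a(ω) = c·ρ1·ω^{−q2} − ρ2·ω^{q1}, b(ω) = ρ1·ω^{q2} − c·ρ2·ω^{−q1}), for every ω > 0 one has a''(ω)·b'(ω) − a'(ω)·b''(ω) > 0. -/

import Mathlib

open Real

private lemma hdcomb (C D p q : ℝ) {x : ℝ} (hx : 0 < x) :
    HasDerivAt (fun t : ℝ => C * t ^ p - D * t ^ q)
      ((C * p) * x ^ (p - 1) - (D * q) * x ^ (q - 1)) x := by
  have h1 := (Real.hasDerivAt_rpow_const (p := p) (Or.inl hx.ne')).const_mul C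
  have h2 := (Real.hasDerivAt_rpow_const (p := q) (Or.inl hx.ne')).const_mul D
  refine (h1.sub h2).congr_deriv ?_
  ring

set_option maxHeartbeats 1600000 in
theorem stmt8 (c q1 q2 : ℝ) (hc : 0 < c) (h1 : 0 < q1) (h2 : q1 < q2) (h3 : q2 ≤ 1)
    (ρ1 ρ2 : ℝ)
    (hρ1 : ρ1 = sin (q1 * π / 2) / sin ((q2 - q1) * π / 2))
    (hρ2 : ρ2 = sin (q2 * π / 2) / sin ((q2 - q1) * π / 2))
    (a b : ℝ → ℝ)
    (ha : ∀ ω : ℝ, a ω = c * ρ1 * ω ^ (-q2) - ρ2 * ω ^ q1)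
    (hb : ∀ ω : ℝ, b ω = ρ1 * ω ^ q2 - c * ρ2 * ω ^ (-q1)) :
    ∀ ω : ℝ, 0 < ω →
      deriv (deriv a) ω * deriv b ω - deriv a ω * deriv (deriv b) ω > 0 := by
  -- basic positivity facts about ρ1, ρ2
  have hπ := Real.pi_pos
  have hs12 : 0 < sin ((q2 - q1) * π / 2) := by
    apply Real.sin_pos_of_pos_of_lt_pi
    · nlinarith
    · nlinarith
  have hs1 : 0 < sin (q1 * π / 2) := by
    apply Real.sin_pos_of_pos_of_lt_pi
    · positivity
    · nlinarith
  have hs2 : 0 < sin (q2 * π / 2) := by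
    apply Real.sin_pos_of_pos_of_lt_pi
    · nlinarith
    · nlinarith
  have hρ1pos : 0 < ρ1 := by rw [hρ1]; positivity
  have hρ2pos : 0 < ρ2 := by rw [hρ2]; positivity
  -- key inequality: q1 * ρ2 ≤ q2 * ρ1, via concavity of sin
  have hkey : q1 * ρ2 ≤ q2 * ρ1 := by
    have hcon := strictConcaveOn_sin_Icc.concaveOn
    have hx0 : (0 : ℝ) ∈ Set.Icc 0 π := ⟨le_refl _, hπ.le⟩
    have hx2 : q2 * π / 2 ∈ Set.Icc 0 π := by
      constructor
      · nlinarith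
      · nlinarith
    have ht1 : (0:ℝ) ≤ 1 - q1 / q2 := by
      have : q1 / q2 ≤ 1 := (div_le_one (h1.trans h2)).mpr h2.le
      linarith
    have ht2 : (0:ℝ) ≤ q1 / q2 := div_nonneg h1.le (h1.trans h2).le
    have hsum : (1 - q1 / q2) + q1 / q2 = 1 := by ring
    have := hcon.2 hx0 hx2 ht1 ht2 hsum
    have harg : (1 - q1 / q2) • (0:ℝ) + (q1 / q2) • (q2 * π / 2) = q1 * π / 2 := by
      have hq2 : q2 ≠ 0 := (h1.trans h2).ne'
      simp only [smul_eq_mul]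
      field_simp
      ring
    rw [harg] at this
    simp only [smul_eq_mul, Real.sin_zero, mul_zero, zero_add] at this
    -- this : q1 / q2 * sin (q2 * π / 2) ≤ sin (q1 * π / 2)
    have hq2 : (0:ℝ) < q2 := h1.trans h2
    rw [div_mul_eq_mul_div, div_le_iff₀ hq2] at this
    rw [hρ1, hρ2, ← mul_div_assoc, ← mul_div_assoc]
    exact (div_le_div_iff_of_pos_right hs12).mpr (by nlinarith)
  intro ω hω
  -- rewrite a and b as lambdas
  have haf : a = fun t : ℝ => (c * ρ1) * t ^ (-q2) - ρ2 * t ^ q1 := by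
    funext t; rw [ha t]
  have hbf : b = fun t : ℝ => ρ1 * t ^ q2 - (c * ρ2) * t ^ (-q1) := by
    funext t; rw [hb t]
  -- first derivatives on (0, ∞)
  have hda : ∀ x : ℝ, 0 < x →
      deriv a x = ((c * ρ1) * (-q2)) * x ^ (-q2 - 1) - (ρ2 * q1) * x ^ (q1 - 1) := by
    intro x hx
    rw [haf]
    exact (hdcomb (c * ρ1) ρ2 (-q2) q1 hx).deriv
  have hdb : ∀ x : ℝ, 0 < x →
      deriv b x = (ρ1 * q2) * x ^ (q2 - 1) - ((c * ρ2) * (-q1)) * x ^ (-q1 - 1) := by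
    intro x hx
    rw [hbf]
    exact (hdcomb ρ1 (c * ρ2) q2 (-q1) hx).deriv
  -- second derivatives at ω
  have hmem : Set.Ioi (0:ℝ) ∈ nhds ω := isOpen_Ioi.mem_nhds hω
  have hea : deriv a =ᶠ[nhds ω]
      (fun t : ℝ => ((c * ρ1) * (-q2)) * t ^ (-q2 - 1) - (ρ2 * q1) * t ^ (q1 - 1)) :=
    Filter.eventuallyEq_of_mem hmem (fun x hx => hda x hx)
  have heb : deriv b =ᶠ[nhds ω]
      (fun t : ℝ => (ρ1 * q2) * t ^ (q2 - 1) - ((c * ρ2) * (-q1)) * t ^ (-q1 - 1)) :=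
    Filter.eventuallyEq_of_mem hmem (fun x hx => hdb x hx)
  have hdda : deriv (deriv a) ω =
      ((c * ρ1) * (-q2) * (-q2 - 1)) * ω ^ (-q2 - 1 - 1)
        - (ρ2 * q1 * (q1 - 1)) * ω ^ (q1 - 1 - 1) := by
    rw [hea.deriv_eq]
    exact (hdcomb ((c * ρ1) * (-q2)) (ρ2 * q1) (-q2 - 1) (q1 - 1) hω).deriv
  have hddb : deriv (deriv b) ω =
      (ρ1 * q2 * (q2 - 1)) * ω ^ (q2 - 1 - 1)
        - ((c * ρ2) * (-q1) * (-q1 - 1)) * ω ^ (-q1 - 1 - 1) := by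
    rw [heb.deriv_eq]
    exact (hdcomb (ρ1 * q2) ((c * ρ2) * (-q1)) (q2 - 1) (-q1 - 1) hω).deriv
  rw [hdda, hddb, hda ω hω, hdb ω hω]
  -- convert rpow arithmetic to u = ω^q1, v = ω^q2
  have E : ∀ p : ℝ, ω ^ (p - 1) = ω ^ p / ω := by
    intro p; rw [Real.rpow_sub hω, Real.rpow_one]
  have Eneg1 : ω ^ (-q1) = (ω ^ q1)⁻¹ := Real.rpow_neg hω.le q1
  have Eneg2 : ω ^ (-q2) = (ω ^ q2)⁻¹ := Real.rpow_neg hω.le q2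
  rw [show (-q2 - 1 - 1 : ℝ) = (-q2 - 1) - 1 by ring, E, E,
      show (q1 - 1 - 1 : ℝ) = (q1 - 1) - 1 by ring, E, E,
      show (q2 - 1 - 1 : ℝ) = (q2 - 1) - 1 by ring, E, E,
      show (-q1 - 1 - 1 : ℝ) = (-q1 - 1) - 1 by ring, E, E,
      show (-q2 - 1 : ℝ) = (-q2) - 1 by ring, E,
      show (-q1 - 1 : ℝ) = (-q1) - 1 by ring, E,
      Eneg1, Eneg2]
  set u := ω ^ q1 with hu
  set v := ω ^ q2 with hv
  have hupos : 0 < u := Real.rpow_pos_of_pos hω q1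
  have hvpos : 0 < v := Real.rpow_pos_of_pos hω q2
  -- identify the difference with an explicit positive expression
  have hEq :
      (((c * ρ1) * (-q2) * (-q2 - 1)) * (v⁻¹ / ω / ω)
          - (ρ2 * q1 * (q1 - 1)) * (u / ω / ω)) *
        ((ρ1 * q2) * (v / ω) - ((c * ρ2) * (-q1)) * (u⁻¹ / ω))
        - (((c * ρ1) * (-q2)) * (v⁻¹ / ω) - (ρ2 * q1) * (u / ω)) *
        ((ρ1 * q2 * (q2 - 1)) * (v / ω / ω)
          - ((c * ρ2) * (-q1) * (-q1 - 1)) * (u⁻¹ / ω / ω))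
      = (ρ1 * ρ2 * q1 * q2 * (q2 - q1) * (c ^ 2 + (u * v) ^ 2) / (u * v)
          + 2 * c * (q2 ^ 3 * ρ1 ^ 2 - q1 ^ 3 * ρ2 ^ 2)) / ω ^ 3 := by
    field_simp
    ring
  rw [hEq]
  -- positivity
  have hterm2 : 0 ≤ q2 ^ 3 * ρ1 ^ 2 - q1 ^ 3 * ρ2 ^ 2 := by
    nlinarith [mul_pos h1 hρ2pos, sq_nonneg (q1 * ρ2), sq_nonneg (q2 * ρ1),
      mul_le_mul_of_nonneg_left hkey (mul_pos h1 hρ2pos).le,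
      mul_le_mul_of_nonneg_left hkey (mul_pos (h1.trans h2) hρ1pos).le]
  have hterm1 : 0 < ρ1 * ρ2 * q1 * q2 * (q2 - q1) * (c ^ 2 + (u * v) ^ 2) / (u * v) :=
    div_pos
      (mul_pos (mul_pos (mul_pos (mul_pos (mul_pos hρ1pos hρ2pos) h1) (h1.trans h2))
        (by linarith)) (by positivity))
      (mul_pos hupos hvpos)
  have hω3 : 0 < ω ^ 3 := by positivity
  have : 0 < ρ1 * ρ2 * q1 * q2 * (q2 - q1) * (c ^ 2 + (u * v) ^ 2) / (u * v)
      + 2 * c * (q2 ^ 3 * ρ1 ^ 2 - q1 ^ 3 * ρ2 ^ 2) := by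
    nlinarith
  positivity
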